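/- Let α and β be multi-indices in ℕ^g of weights n and m respectively with α ≠ β, and let σ ∈ S_n and τ ∈ S_m. Then for every d ≥ 1, ∫_{U(d)^g} p_{σ,α}(U) · conj(p_{τ,β}(U)) dU = 0. -/

import Mathlib

open MeasureTheory Matrix

noncomputable section

abbrev UG (d : ℕ) : Type := Matrix.unitaryGroup (Fin d) ℂ

instance (d : ℕ) : CompactSpace (UG d) := by
  refine isCompact_iff_compactSpace.mp ?_
  have hsub : (Matrix.unitaryGroup (Fin d) ℂ : Set (Matrix (Fin d) (Fin d) ℂ)) ⊆
      Set.pi Set.univ (fun _ : Fin d => Set.pi Set.univ fun _ : Fin d =>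
        Metric.closedBall (0 : ℂ) 1) := by
    intro M hM i _ j _
    simpa [Metric.mem_closedBall, dist_zero_right] using
      entry_norm_bound_of_unitary hM i j
  have hcomp : IsCompact (Set.pi Set.univ fun _ : Fin d => Set.pi Set.univ fun _ : Fin d =>
      Metric.closedBall (0 : ℂ) 1) :=
    isCompact_univ_pi fun _ => isCompact_univ_pi fun _ => isCompact_closedBall 0 1
  have hclosed : IsClosed (Matrix.unitaryGroup (Fin d) ℂ : Set (Matrix (Fin d) (Fin d) ℂ)) := by
    have heq : (Matrix.unitaryGroup (Fin d) ℂ : Set (Matrix (Fin d) (Fin d) ℂ)) =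
        ((fun M : Matrix (Fin d) (Fin d) ℂ => star M * M) ⁻¹' {1}) ∩
        ((fun M : Matrix (Fin d) (Fin d) ℂ => M * star M) ⁻¹' {1}) := by
      ext M
      simp [Unitary.mem_iff, Set.mem_preimage]
    rw [heq]
    exact (isClosed_singleton.preimage (continuous_id.matrix_conjTranspose.matrix_mul
      continuous_id)).inter
      (isClosed_singleton.preimage (continuous_id.matrix_mul
        continuous_id.matrix_conjTranspose))
  exact hcomp.of_isClosed_subset hclosed hsub

instance (d : ℕ) : IsTopologicalGroup (UG d) where
  continuous_mul := continuous_mul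
  continuous_inv := by
    have h : (fun U : UG d => U⁻¹) = fun U : UG d => star U := rfl
    rw [h]
    exact (continuous_subtype_val.matrix_conjTranspose).subtype_mk _

instance (d : ℕ) : MeasurableSpace (UG d) := borel _
instance (d : ℕ) : BorelSpace (UG d) := ⟨rfl⟩

/-- The normalized Haar probability measure on the unitary group `U(d)`. -/
def haarUG (d : ℕ) : Measure (UG d) :=
  ((Measure.haar : Measure (UG d)) Set.univ)⁻¹ • (Measure.haar : Measure (UG d))

/-- The product of `g` copies of normalized Haar measure on `U(d)`. -/
def haarPow (g d : ℕ) : Measure (Fin g → UG d) := Measure.pi fun _ => haarUG d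


/-- `partialSum α j = α₀ + ⋯ + α_{j-1}` (out-of-range parts count as `0`). -/
def partialSum {g : ℕ} (α : Fin g → ℕ) (j : ℕ) : ℕ :=
  ∑ t ∈ Finset.range j, if h : t < g then α ⟨t, h⟩ else 0

/-- The index `j(i)` of the block of the multi-index `α` containing position `i`
(`0`-indexed): the unique `j` with `α₀ + ⋯ + α_{j-1} ≤ i < α₀ + ⋯ + α_j`, whenever
`i < |α|`. -/
def blockIdx {g : ℕ} (α : Fin g → ℕ) (i : ℕ) : ℕ :=
  ((Finset.range g).filter fun j => partialSum α (j + 1) ≤ i).card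

/-- The matrix `A_{j(i)}` attached to position `i` by the multi-index `α`. -/
def blockMat {g m : ℕ} (α : Fin g → ℕ) (A : Fin g → Matrix (Fin m) (Fin m) ℂ) (i : ℕ) :
    Matrix (Fin m) (Fin m) ℂ :=
  if h : blockIdx α i < g then A ⟨blockIdx α i, h⟩ else 1

/-- The tensor power `A₁^{⊗α₁} ⊗ ⋯ ⊗ A_g^{⊗α_g}`, as a matrix indexed by functions
`Fin n → Fin m`; its `(f, h)` entry is `Π_{i} (A_{j(i)})_{f i, h i}`. -/
def tensorPow (g m n : ℕ) (α : Fin g → ℕ) (A : Fin g → Matrix (Fin m) (Fin m) ℂ) :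
    Matrix (Fin n → Fin m) (Fin n → Fin m) ℂ :=
  Matrix.of fun f h => ∏ i : Fin n, blockMat α A (i : ℕ) (f i) (h i)

/-- The matrix of the operator permuting the tensor factors of `(ℂ^m)^{⊗n}` according to
`σ`: its `(f, h)` entry is `1` if `h = f ∘ σ` and `0` otherwise. -/
def permMat (m n : ℕ) (σ : Equiv.Perm (Fin n)) :
    Matrix (Fin n → Fin m) (Fin n → Fin m) ℂ :=
  Matrix.of fun f h => if h = f ∘ σ then 1 else 0

/-- The generalized power-sum trace monomial
`p_{σ,α}(A) = tr(ρ(σ⁻¹) ∘ A₁^{⊗α₁} ⊗ ⋯ ⊗ A_g^{⊗α_g})`,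
equal to the product over the disjoint cycles `(i₁ ⋯ i_ℓ)` of `σ` (fixed points counted as
`1`-cycles) of `tr(A_{j(i₁)} ⋯ A_{j(i_ℓ)})`. -/
def pPoly {g : ℕ} (m n : ℕ) (σ : Equiv.Perm (Fin n)) (α : Fin g → ℕ)
    (A : Fin g → Matrix (Fin m) (Fin m) ℂ) : ℂ :=
  Matrix.trace (permMat m n σ⁻¹ * tensorPow g m n α A)

section Aux

open Finset

lemma filter_antitone_eq_range {g : ℕ} (p : ℕ → Prop) [DecidablePred p]
    (hp : ∀ {j j' : ℕ}, j' ≤ j → p j → p j') :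
    (Finset.range g).filter p = Finset.range (((Finset.range g).filter p).card) := by
  set s := (Finset.range g).filter p with hs
  have hsub : s ⊆ Finset.range s.card := by
    intro j hj
    rw [Finset.mem_range]
    have h1 : Finset.range (j + 1) ⊆ s := by
      intro j' hj'
      rw [Finset.mem_range, Nat.lt_succ_iff] at hj'
      rw [hs, Finset.mem_filter] at hj ⊢
      exact ⟨Finset.mem_range.mpr (lt_of_le_of_lt hj' (Finset.mem_range.mp hj.1)),
        hp hj' hj.2⟩
    have := Finset.card_le_card h1
    simpa [Nat.succ_le_iff] using this
  exact Finset.eq_of_subset_of_card_le hsub (by simp)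

lemma partialSum_mono {g : ℕ} (α : Fin g → ℕ) : Monotone (partialSum α) :=
  fun _ _ h => Finset.sum_le_sum_of_subset (Finset.range_subset_range.mpr h)

lemma partialSum_succ {g : ℕ} (α : Fin g → ℕ) (j : Fin g) :
    partialSum α (j + 1) = partialSum α j + α j := by
  rw [partialSum, Finset.sum_range_succ, dif_pos j.isLt]
  rfl

lemma partialSum_weight {g : ℕ} (α : Fin g → ℕ) : partialSum α g = ∑ j, α j := by
  rw [partialSum, ← Fin.sum_univ_eq_sum_range (fun t => if h : t < g then α ⟨t, h⟩ else 0) g]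
  exact Finset.sum_congr rfl fun i _ => by simp

lemma blockIdx_eq_iff {g : ℕ} (α : Fin g → ℕ) (j₀ : Fin g) (i : ℕ) :
    blockIdx α i = (j₀ : ℕ) ↔ partialSum α j₀ ≤ i ∧ i < partialSum α (j₀ + 1) := by
  have hp : ∀ {j j' : ℕ}, j' ≤ j → partialSum α (j + 1) ≤ i → partialSum α (j' + 1) ≤ i :=
    fun h h2 => le_trans (partialSum_mono α (Nat.succ_le_succ h)) h2
  have hfilter := filter_antitone_eq_range (g := g) (fun j => partialSum α (j + 1) ≤ i) hp
  have hcard : blockIdx α i =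
      ((Finset.range g).filter fun j => partialSum α (j + 1) ≤ i).card := rfl
  constructor
  · intro h
    constructor
    · rcases Nat.eq_zero_or_pos (j₀ : ℕ) with h0 | h0
      · rw [h0]; simp [partialSum]
      · have hmem : (j₀ : ℕ) - 1 ∈ Finset.range (blockIdx α i) := by
          rw [Finset.mem_range]; omega
        rw [hcard, ← hfilter, Finset.mem_filter] at hmem
        have := hmem.2
        have hj : (j₀ : ℕ) - 1 + 1 = (j₀ : ℕ) := by omega
        rwa [hj] at this
    · have hmem : (j₀ : ℕ) ∉ Finset.range (blockIdx α i) := by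
        rw [Finset.mem_range]; omega
      rw [hcard, ← hfilter, Finset.mem_filter] at hmem
      push_neg at hmem
      exact hmem (Finset.mem_range.mpr j₀.isLt)
  · rintro ⟨h1, h2⟩
    have hnot : (j₀ : ℕ) ∉ Finset.range (blockIdx α i) := by
      rw [hcard, ← hfilter, Finset.mem_filter]
      intro hmem
      exact absurd hmem.2 (not_le.mpr h2)
    rw [Finset.mem_range, not_lt] at hnot
    rcases lt_or_eq_of_le hnot with hlt | heq
    · exfalso
      have hmem : blockIdx α i ∈ Finset.range (blockIdx α i) := by
        rw [hcard, ← hfilter, Finset.mem_filter]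
        refine ⟨Finset.mem_range.mpr (lt_trans hlt j₀.isLt), ?_⟩
        exact le_trans (partialSum_mono α (Nat.succ_le_of_lt hlt)) h1
      simp at hmem
    · omega

lemma card_blockIdx_fiber {g n : ℕ} (α : Fin g → ℕ) (hα : ∑ j, α j = n) (j₀ : Fin g) :
    (Finset.univ.filter fun i : Fin n => blockIdx α (i : ℕ) = (j₀ : ℕ)).card = α j₀ := by
  have hle : partialSum α ((j₀ : ℕ) + 1) ≤ n := by
    rw [← hα, ← partialSum_weight α]
    exact partialSum_mono α j₀.isLt
  have hIco : (Finset.univ.filter fun i : Fin n => blockIdx α (i : ℕ) = (j₀ : ℕ)).card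
      = (Finset.Ico (partialSum α j₀) (partialSum α ((j₀ : ℕ) + 1))).card := by
    apply Finset.card_bij (fun (a : Fin n) _ => (a : ℕ))
    · intro a ha
      rw [Finset.mem_filter] at ha
      rw [Finset.mem_Ico, ← blockIdx_eq_iff]
      exact ha.2
    · intro a _ b _ h
      exact Fin.ext h
    · intro x hx
      rw [Finset.mem_Ico, ← blockIdx_eq_iff] at hx
      have hxn : x < n := by
        have := (blockIdx_eq_iff α j₀ x).mp hx
        omega
      exact ⟨⟨x, hxn⟩, Finset.mem_filter.mpr ⟨Finset.mem_univ _, hx⟩, rfl⟩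
  rw [hIco, Nat.card_Ico, partialSum_succ]
  omega

lemma pPoly_smul_single {g : ℕ} (d n : ℕ) (σ : Equiv.Perm (Fin n)) (α : Fin g → ℕ)
    (hα : ∑ j, α j = n) (j₀ : Fin g) (z : ℂ) (A : Fin g → Matrix (Fin d) (Fin d) ℂ) :
    pPoly d n σ α (fun j => (if j = j₀ then z else 1) • A j)
      = z ^ α j₀ * pPoly d n σ α A := by
  have hb : ∀ i : ℕ, blockMat α (fun j => (if j = j₀ then z else 1) • A j) i
      = (if blockIdx α i = (j₀ : ℕ) then z else 1) • blockMat α A i := by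
    intro i
    unfold blockMat
    by_cases hlt : blockIdx α i < g
    · rw [dif_pos hlt, dif_pos hlt]
      refine congrArg (· • _) ?_
      simp [Fin.ext_iff]
    · rw [dif_neg hlt, dif_neg hlt]
      have hne : blockIdx α i ≠ (j₀ : ℕ) := by
        have := j₀.isLt; omega
      rw [if_neg hne, one_smul]
  have hT : tensorPow g d n α (fun j => (if j = j₀ then z else 1) • A j)
      = z ^ α j₀ • tensorPow g d n α A := by
    ext f h
    show (∏ i : Fin n, blockMat α (fun j => (if j = j₀ then z else 1) • A j)
        (i : ℕ) (f i) (h i)) = (z ^ α j₀ • tensorPow g d n α A) f h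
    simp only [hb]
    have : ∀ i : Fin n,
        ((if blockIdx α (i : ℕ) = (j₀ : ℕ) then z else 1) • blockMat α A (i : ℕ)) (f i) (h i)
        = (if blockIdx α (i : ℕ) = (j₀ : ℕ) then z else 1) * blockMat α A (i : ℕ) (f i) (h i) :=
      fun i => rfl
    simp only [this]
    rw [Finset.prod_mul_distrib, Finset.prod_ite, Finset.prod_const, Finset.prod_const_one,
      mul_one, card_blockIdx_fiber α hα j₀]
    rfl
  rw [pPoly, hT, Matrix.mul_smul, Matrix.trace_smul, smul_eq_mul, pPoly]

instance haarUG_prob (d : ℕ) : MeasureTheory.IsProbabilityMeasure (haarUG d) := by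
  constructor
  rw [haarUG, MeasureTheory.Measure.smul_apply, smul_eq_mul]
  refine ENNReal.inv_mul_cancel ?_ ?_
  · exact (isOpen_univ.measure_ne_zero _ Set.univ_nonempty)
  · exact (isCompact_univ.measure_lt_top).ne

instance haarUG_inv (d : ℕ) : (haarUG d).IsMulLeftInvariant := by
  unfold haarUG; infer_instance

end Aux

set_option maxHeartbeats 2000000 in
/-- **Orthogonality for distinct multi-indices.** If `α ≠ β` are multi-indices of weights
`n` and `m`, then for every `d ≥ 1`,
`∫_{U(d)^g} p_{σ,α}(U) conj(p_{τ,β}(U)) dU = 0`. -/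
theorem trace_monomial_orthogonality_of_ne (g n m : ℕ) (α β : Fin g → ℕ)
    (hα : ∑ j, α j = n) (hβ : ∑ j, β j = m) (hαβ : α ≠ β)
    (σ : Equiv.Perm (Fin n)) (τ : Equiv.Perm (Fin m)) (d : ℕ) (hd : 1 ≤ d) :
    ∫ U : Fin g → UG d,
        pPoly d n σ α (fun j => (U j : Matrix (Fin d) (Fin d) ℂ)) *
          (starRingEnd ℂ) (pPoly d m τ β fun j => (U j : Matrix (Fin d) (Fin d) ℂ))
        ∂(haarPow g d) = 0 := by
  classical
  obtain ⟨j₀, hj₀⟩ := Function.ne_iff.mp hαβ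
  set a := α j₀ with ha
  set b := β j₀ with hb
  set N : ℕ := a + b + 1 with hN
  have hN0 : N ≠ 0 := by omega
  set ζ : ℂ := Complex.exp (2 * Real.pi * Complex.I / N) with hζdef
  have hζ : IsPrimitiveRoot ζ N := Complex.isPrimitiveRoot_exp N hN0
  have hζabs : ‖ζ‖ = 1 := by
    have h1 : 2 * (Real.pi : ℂ) * Complex.I / N = ((2 * Real.pi / N : ℝ) : ℂ) * Complex.I := by
      push_cast; ring
    rw [hζdef, h1, Complex.norm_exp_ofReal_mul_I]
  have hζ0 : ζ ≠ 0 := Complex.exp_ne_zero _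
  have hζconj : (starRingEnd ℂ) ζ = ζ⁻¹ := by
    refine eq_inv_of_mul_eq_one_right ?_
    rw [Complex.mul_conj, Complex.normSq_eq_norm_sq, hζabs]
    norm_num
  have hζmul : ζ * (starRingEnd ℂ) ζ = 1 := by
    rw [hζconj, mul_inv_cancel₀ hζ0]
  have hmem : ζ • (1 : Matrix (Fin d) (Fin d) ℂ) ∈ Matrix.unitaryGroup (Fin d) ℂ := by
    rw [Matrix.mem_unitaryGroup_iff, star_smul, star_one]
    rw [Matrix.smul_mul, Matrix.mul_smul, smul_smul, one_mul]
    show (ζ * (starRingEnd ℂ) ζ) • (1 : Matrix (Fin d) (Fin d) ℂ) = 1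
    rw [hζmul, one_smul]
  set cz : UG d := ⟨ζ • (1 : Matrix (Fin d) (Fin d) ℂ), hmem⟩ with hcz
  set c : Fin g → UG d := fun j => if j = j₀ then cz else 1 with hc
  have hcoe : ∀ (j : Fin g) (M : Matrix (Fin d) (Fin d) ℂ),
      ((c j : Matrix (Fin d) (Fin d) ℂ)) * M = (if j = j₀ then ζ else 1) • M := by
    intro j M
    by_cases h : j = j₀ <;> simp [hc, h, hcz, Matrix.smul_mul]
  set φ : (Fin g → UG d) → (Fin g → UG d) := fun U j => c j * U j with hφ
  have hmp : MeasurePreserving φ (haarPow g d) (haarPow g d) := by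
    rw [haarPow]
    exact measurePreserving_pi _ _
      (fun j => measurePreserving_mul_left (haarUG d) (c j))
  have hemb : MeasurableEmbedding φ := by
    have hφeq : φ = (MeasurableEquiv.piCongrRight
        (fun j => (Homeomorph.mulLeft (c j)).toMeasurableEquiv)) := by
      funext U
      funext j
      rfl
    rw [hφeq]
    exact MeasurableEquiv.measurableEmbedding _
  set f : (Fin g → UG d) → ℂ := fun U =>
    pPoly d n σ α (fun j => (U j : Matrix (Fin d) (Fin d) ℂ)) *
      (starRingEnd ℂ) (pPoly d m τ β fun j => (U j : Matrix (Fin d) (Fin d) ℂ)) with hf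
  show ∫ U, f U ∂(haarPow g d) = 0
  have key : ∀ U, f (φ U) = (ζ ^ a * (starRingEnd ℂ) ζ ^ b) * f U := by
    intro U
    have hUp : (fun j => ((φ U) j : Matrix (Fin d) (Fin d) ℂ))
        = fun j => (if j = j₀ then ζ else 1) • (U j : Matrix (Fin d) (Fin d) ℂ) := by
      funext j
      show ((c j * U j : UG d) : Matrix (Fin d) (Fin d) ℂ) = _
      rw [Submonoid.coe_mul, hcoe]
    rw [hf]
    simp only [hUp, pPoly_smul_single d n σ α hα j₀ ζ, pPoly_smul_single d m τ β hβ j₀ ζ,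
      _root_.map_mul, map_pow]
    ring
  have h2 : ∫ U, f (φ U) ∂(haarPow g d) = ∫ U, f U ∂(haarPow g d) :=
    hmp.integral_comp hemb f
  have h3 : ∫ U, f (φ U) ∂(haarPow g d)
      = (ζ ^ a * (starRingEnd ℂ) ζ ^ b) * ∫ U, f U ∂(haarPow g d) := by
    simp_rw [key]
    exact integral_const_mul _ _
  have hIeq : ∫ U, f U ∂(haarPow g d)
      = (ζ ^ a * (starRingEnd ℂ) ζ ^ b) * ∫ U, f U ∂(haarPow g d) := h2 ▸ h3
  have hF : ζ ^ a * (starRingEnd ℂ) ζ ^ b ≠ 1 := by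
    have hzp : ζ ^ a * (ζ⁻¹) ^ b = ζ ^ ((a : ℤ) - (b : ℤ)) := by
      rw [inv_pow, ← zpow_natCast ζ a, ← zpow_natCast ζ b, ← _root_.zpow_neg, ← zpow_add₀ hζ0, sub_eq_add_neg]
    rw [hζconj, hzp]
    intro h1
    have hdvd := (hζ.zpow_eq_one_iff_dvd _).mp h1
    have hlt : ((a : ℤ) - (b : ℤ)).natAbs < ((N : ℤ)).natAbs := by omega
    have := Int.eq_zero_of_dvd_of_natAbs_lt_natAbs hdvd hlt
    have : a = b := by omega
    exact hj₀ this
  have hsub : (ζ ^ a * (starRingEnd ℂ) ζ ^ b - 1) * ∫ U, f U ∂(haarPow g d) = 0 := by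
    rw [sub_mul, one_mul, ← hIeq, sub_self]
  rcases mul_eq_zero.mp hsub with h | h
  · exact absurd (sub_eq_zero.mp h) hF
  · exact h


end
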